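/- For every nonnegative integer n and real numbers a and ℓ, the sum over i+j=n of binomial(2i+a,i)*binomial(2j,j) equals the sum over i+j=n of binomial(2i+a-ℓ,i)*binomial(2j+ℓ,j). -/

import Mathlib

open Finset Polynomial

/-- Generalized binomial coefficient with real upper argument. -/
noncomputable def rchoose (x : ℝ) (k : ℕ) : ℝ :=
  (∏ j ∈ Finset.range k, (x - j)) / (Nat.factorial k : ℝ)

lemma rchoose_zero (x : ℝ) : rchoose x 0 = 1 := by simp [rchoose]

lemma rchoose_pascal (x : ℝ) (k : ℕ) :
    rchoose x (k+1) = rchoose (x-1) (k+1) + rchoose (x-1) k := by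
  have hk : (Nat.factorial k : ℝ) ≠ 0 := by positivity
  have hk1 : (Nat.factorial (k+1) : ℝ) ≠ 0 := by positivity
  have e1 : ∏ j ∈ Finset.range (k+1), (x - j)
      = x * ∏ j ∈ Finset.range k, (x - 1 - j) := by
    rw [Finset.prod_range_succ']
    simp only [Nat.cast_zero, sub_zero]
    rw [mul_comm]
    congr 1
    apply Finset.prod_congr rfl
    intro j _; push_cast; ring
  have e2 : ∏ j ∈ Finset.range (k+1), (x - 1 - j)
      = (∏ j ∈ Finset.range k, (x - 1 - j)) * (x - 1 - k) := by
    rw [Finset.prod_range_succ]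
  rw [rchoose, rchoose, rchoose, e1, e2]
  have hfac : (Nat.factorial (k+1) : ℝ) = (k+1) * Nat.factorial k := by
    push_cast [Nat.factorial_succ]; ring
  rw [hfac]
  field_simp
  ring

lemma prod_desc (m k : ℕ) :
    ∏ t ∈ Finset.range k, ((m:ℝ) - t) = (m.descFactorial k : ℝ) := by
  induction k with
  | zero => simp
  | succ k ih =>
    rw [Finset.prod_range_succ, ih, Nat.descFactorial_succ]
    by_cases h : k ≤ m
    · push_cast [h]; ring
    · have h1 : m.descFactorial k = 0 := Nat.descFactorial_eq_zero_iff_lt.mpr (by omega)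
      have h2 : m - k = 0 := by omega
      rw [h1, h2]; push_cast; ring

lemma rchoose_nat (m k : ℕ) : rchoose (m:ℝ) k = (m.choose k : ℝ) := by
  have hk : (Nat.factorial k : ℝ) ≠ 0 := by positivity
  rw [rchoose, prod_desc, Nat.descFactorial_eq_factorial_mul_choose]
  push_cast
  field_simp

/-- The symmetric double sum. -/
noncomputable def S (n : ℕ) (x y : ℝ) : ℝ :=
  ∑ i ∈ Finset.range (n+1),
    rchoose (x + 2*(i:ℝ)) i * rchoose (y + 2*(((n - i : ℕ)):ℝ)) (n - i)

lemma S_shift (n : ℕ) : ∀ x y : ℝ, S n x y = S n (x-1) (y+1) := by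
  induction n with
  | zero =>
      intro x y
      simp [S, rchoose_zero]
  | succ n ih =>
      intro x y
      have h1 : S (n+1) x y
          = (∑ i ∈ Finset.range (n+2),
              rchoose (x - 1 + 2*(i:ℝ)) i * rchoose (y + 2*(((n + 1 - i : ℕ)):ℝ)) (n + 1 - i))
            + S n (x+1) y := by
        rw [S, Finset.sum_range_succ' _ (n+1), Finset.sum_range_succ' _ (n+1)]
        have step : ∀ i ∈ Finset.range (n+1),
            rchoose (x + 2*((i+1 : ℕ):ℝ)) (i+1) * rchoose (y + 2*(((n + 1 - (i+1) : ℕ)):ℝ)) (n + 1 - (i+1))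
            = rchoose (x - 1 + 2*((i+1 : ℕ):ℝ)) (i+1) * rchoose (y + 2*(((n + 1 - (i+1) : ℕ)):ℝ)) (n + 1 - (i+1))
              + rchoose (x + 1 + 2*(i:ℝ)) i * rchoose (y + 2*(((n - i : ℕ)):ℝ)) (n - i) := by
          intro i _
          have hsub : n + 1 - (i+1) = n - i := by omega
          rw [hsub]
          have hp := rchoose_pascal (x + 2*((i+1 : ℕ):ℝ)) i
          have hx1 : x + 2*((i+1 : ℕ):ℝ) - 1 = x - 1 + 2*((i+1:ℕ):ℝ) := by push_cast; ring
          have hx2 : x + 2*((i+1 : ℕ):ℝ) - 1 = x + 1 + 2*(i:ℝ) := by push_cast; ring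
          rw [hp, hx1] at *
          rw [← hx1, hx2]
          ring
        rw [Finset.sum_congr rfl step, Finset.sum_add_distrib]
        simp only [Nat.cast_zero, mul_zero, add_zero, Nat.sub_zero, rchoose_zero, one_mul, S]
        ring
      have h2 : S (n+1) (x-1) (y+1)
          = (∑ i ∈ Finset.range (n+2),
              rchoose (x - 1 + 2*(i:ℝ)) i * rchoose (y + 2*(((n + 1 - i : ℕ)):ℝ)) (n + 1 - i))
            + S n (x-1) (y+2) := by
        rw [S, Finset.sum_range_succ _ (n+1), Finset.sum_range_succ _ (n+1)]
        have step : ∀ i ∈ Finset.range (n+1),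
            rchoose (x - 1 + 2*(i:ℝ)) i * rchoose (y + 1 + 2*(((n + 1 - i : ℕ)):ℝ)) (n + 1 - i)
            = rchoose (x - 1 + 2*(i:ℝ)) i * rchoose (y + 2*(((n + 1 - i : ℕ)):ℝ)) (n + 1 - i)
              + rchoose (x - 1 + 2*(i:ℝ)) i * rchoose (y + 2 + 2*(((n - i : ℕ)):ℝ)) (n - i) := by
          intro i hi
          simp only [Finset.mem_range] at hi
          have hsub : n + 1 - i = (n - i) + 1 := by omega
          rw [hsub]
          have hp := rchoose_pascal (y + 1 + 2*(((n - i : ℕ) + 1 : ℕ):ℝ)) (n - i)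
          have hy1 : y + 1 + 2*(((n - i : ℕ) + 1 : ℕ):ℝ) - 1 = y + 2*(((n-i:ℕ)+1 : ℕ):ℝ) := by
            push_cast; ring
          have hy2 : y + 1 + 2*(((n - i : ℕ) + 1 : ℕ):ℝ) - 1 = y + 2 + 2*((n - i : ℕ):ℝ) := by
            push_cast; ring
          have hcast : (((n - i : ℕ) + 1 : ℕ):ℝ) = ((n - i : ℕ):ℝ) + 1 := by push_cast; ring
          rw [hcast] at hp hy1 hy2
          rw [show ((( (n - i : ℕ) + 1 : ℕ)):ℝ) = ((n - i : ℕ):ℝ) + 1 from by push_cast; ring]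
          rw [hp, hy1]
          rw [show y + 2*(((n - i : ℕ):ℝ)+1) = y + 2 + 2*((n - i : ℕ):ℝ) from by ring]
          ring
        rw [Finset.sum_congr rfl step, Finset.sum_add_distrib]
        simp only [Nat.sub_self, Nat.cast_zero, mul_zero, add_zero, rchoose_zero, mul_one, S]
        have : ∀ i ∈ Finset.range (n+1),
            rchoose (x - 1 + 2*(i:ℝ)) i * rchoose (y + 2 + 2*(((n - i : ℕ)):ℝ)) (n - i)
            = rchoose (x - 1 + 2*(i:ℝ)) i * rchoose (y + 2 + 2*(((n - i : ℕ)):ℝ)) (n - i) := fun _ _ => rfl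
        ring
      have e : S n (x+1) y = S n (x-1) (y+2) := by
        rw [ih (x+1) y, show x+1-1 = x from by ring, ih x (y+1),
          show y+1+1 = y+2 from by ring]
      rw [h1, h2, e]

/-- Polynomial in the shift variable whose evaluation gives `S n (a - t) t`. -/
noncomputable def P (n : ℕ) (a : ℝ) : Polynomial ℝ :=
  ∑ i ∈ Finset.range (n+1),
    Polynomial.C (((Nat.factorial i : ℝ) * (Nat.factorial (n - i) : ℝ))⁻¹) *
      ((∏ j ∈ Finset.range i, (Polynomial.C (a + 2*(i:ℝ) - (j:ℝ)) - Polynomial.X)) *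
       (∏ j ∈ Finset.range (n - i), (Polynomial.X + Polynomial.C (2*(((n - i : ℕ)):ℝ) - (j:ℝ)))))

lemma eval_P (n : ℕ) (a t : ℝ) : (P n a).eval t = S n (a - t) t := by
  rw [P, S, Polynomial.eval_finset_sum]
  apply Finset.sum_congr rfl
  intro i _
  have hi : (Nat.factorial i : ℝ) ≠ 0 := by positivity
  have hni : (Nat.factorial (n - i) : ℝ) ≠ 0 := by positivity
  simp only [Polynomial.eval_mul, Polynomial.eval_C, Polynomial.eval_prod,
    Polynomial.eval_sub, Polynomial.eval_add, Polynomial.eval_X]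
  rw [rchoose, rchoose]
  rw [show ∏ j ∈ Finset.range i, (a + 2*(i:ℝ) - (j:ℝ) - t)
      = ∏ j ∈ Finset.range i, (a - t + 2*(i:ℝ) - (j:ℝ)) from
    Finset.prod_congr rfl (fun j _ => by ring)]
  rw [show ∏ j ∈ Finset.range (n-i), (t + (2*(((n - i : ℕ)):ℝ) - (j:ℝ)))
      = ∏ j ∈ Finset.range (n-i), (t + 2*(((n - i : ℕ)):ℝ) - (j:ℝ)) from
    Finset.prod_congr rfl (fun j _ => by ring)]
  field_simp

lemma P_const (n : ℕ) (a : ℝ) (t : ℝ) : (P n a).eval t = (P n a).eval 0 := by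
  have hstep : ∀ s : ℝ, (P n a).eval (s + 1) = (P n a).eval s := by
    intro s
    rw [eval_P, eval_P, S_shift n (a - s) s, show a - s - 1 = a - (s+1) from by ring]
  have hnat : ∀ m : ℕ, (P n a).eval (m : ℝ) = (P n a).eval 0 := by
    intro m
    induction m with
    | zero => norm_num
    | succ m ih => push_cast; rw [hstep (m:ℝ), ih]
  set Q := P n a - Polynomial.C ((P n a).eval 0) with hQ
  have hzero : Q = 0 := by
    apply Polynomial.eq_zero_of_infinite_isRoot
    apply Set.infinite_of_injective_forall_mem (f := (Nat.cast : ℕ → ℝ)) Nat.cast_injective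
    intro m
    simp only [Set.mem_setOf_eq, Polynomial.IsRoot, hQ, Polynomial.eval_sub,
      Polynomial.eval_C, hnat m, sub_self]
  have := congrArg (Polynomial.eval t) hzero
  simpa [hQ, sub_eq_zero] using this

theorem sum_gen_binom_shift_invariant (n : ℕ) (a ℓ : ℝ) :
    ∑ i ∈ Finset.range (n + 1),
        rchoose (2 * (i : ℝ) + a) i * (Nat.choose (2 * (n - i)) (n - i) : ℝ)
      = ∑ i ∈ Finset.range (n + 1),
        rchoose (2 * (i : ℝ) + a - ℓ) i * rchoose (2 * ((n - i : ℕ) : ℝ) + ℓ) (n - i) := by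
  have hL : ∑ i ∈ Finset.range (n + 1),
      rchoose (2 * (i : ℝ) + a) i * (Nat.choose (2 * (n - i)) (n - i) : ℝ) = S n a 0 := by
    apply Finset.sum_congr rfl
    intro i _
    rw [show (2 : ℝ) * (i:ℝ) + a = a + 2*(i:ℝ) from by ring]
    congr 1
    rw [← rchoose_nat]
    congr 1
    push_cast
    ring
  have hR : ∑ i ∈ Finset.range (n + 1),
      rchoose (2 * (i : ℝ) + a - ℓ) i * rchoose (2 * ((n - i : ℕ) : ℝ) + ℓ) (n - i)
      = S n (a - ℓ) ℓ := by
    apply Finset.sum_congr rfl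
    intro i _
    rw [show (2 : ℝ) * (i:ℝ) + a - ℓ = a - ℓ + 2*(i:ℝ) from by ring,
      show (2 : ℝ) * ((n - i : ℕ):ℝ) + ℓ = ℓ + 2*((n - i : ℕ):ℝ) from by ring]
  have h0 := eval_P n a 0
  have hl := eval_P n a ℓ
  rw [P_const n a ℓ, h0] at hl
  rw [hL, hR, show S n a 0 = S n (a - 0) 0 from by norm_num]
  exact hl
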